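/- arXiv:2603.19494 — 2 statements merged into one kernel-verified Lean document; each statement's English description precedes it below -/
import Mathlib

section
/- Let I = S ⊔ T be a decomposition of a finite set into disjoint subsets, let S' ⊆ I, and put A = S ∩ S' and C = T ∩ S'. Then for any parking function Φ on S and any parking function Ψ on T, one has park( (Φ|Ψ)_{∩S'} ) = park(Φ_{∩A}) | park(Ψ_{∩C}). (This identity yields the compatibility of the concatenation product and the parkization coproduct on the species of parking functions.) -/
def IsWeakSetComp {α : Type*} [DecidableEq α] (I : Finset α) (L : List (Finset α)) : Prop :=
  L.Pairwise Disjoint ∧ L.foldr (· ∪ ·) ∅ = I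

def IsParkingFunction {α : Type*} [DecidableEq α] (I : Finset α) (L : List (Finset α)) : Prop :=
  IsWeakSetComp I L ∧ L.length = I.card ∧
    ∀ k, 1 ≤ k → k ≤ L.length → k ≤ ((L.take k).map Finset.card).sum

def parkAux {α : Type*} [DecidableEq α] :
    List (Finset α) → List (Finset α) → List (Finset α)
  | Φ, [] => Φ
  | Φ, B :: Γ =>
    if (Φ.map Finset.card).sum + B.card ≥ Φ.length + 1 then parkAux (Φ ++ [B]) Γ
    else parkAux Φ Γ

def park {α : Type*} [DecidableEq α] (Γ : List (Finset α)) : List (Finset α) :=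
  parkAux [] Γ

/-- Parkization driven only by the excess `e = |Φ| - ℓ(Φ)`. -/
def epark {α : Type*} [DecidableEq α] (e : ℕ) : List (Finset α) → List (Finset α)
  | [] => []
  | B :: Γ => if 1 ≤ e + B.card then B :: epark (e + B.card - 1) Γ else epark e Γ

/-- Final excess after a scan. -/
def fex {α : Type*} [DecidableEq α] (e : ℕ) : List (Finset α) → ℕ
  | [] => e
  | B :: Γ => if 1 ≤ e + B.card then fex (e + B.card - 1) Γ else fex e Γ

lemma parkAux_eq {α : Type*} [DecidableEq α] (Γ : List (Finset α)) :
    ∀ Φ : List (Finset α), Φ.length ≤ (Φ.map Finset.card).sum →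
    parkAux Φ Γ = Φ ++ epark ((Φ.map Finset.card).sum - Φ.length) Γ := by
  induction Γ with
  | nil => intro Φ h; simp [parkAux, epark]
  | cons B Γ ih =>
    intro Φ h
    by_cases hc : (Φ.map Finset.card).sum + B.card ≥ Φ.length + 1
    · rw [show parkAux Φ (B :: Γ) = parkAux (Φ ++ [B]) Γ from by simp [parkAux, hc],
        ih (Φ ++ [B]) (by simp; omega)]
      simp only [epark, if_pos (show 1 ≤ (Φ.map Finset.card).sum - Φ.length + B.card by omega)]
      simp only [List.map_append, List.sum_append, List.length_append, List.map_cons,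
        List.sum_cons, List.map_nil, List.sum_nil, List.length_cons, List.length_nil,
        List.append_assoc, List.singleton_append]
      have he : (Φ.map Finset.card).sum + (B.card + 0) - (Φ.length + 1)
          = (Φ.map Finset.card).sum - Φ.length + B.card - 1 := by omega
      rw [he]
    · rw [show parkAux Φ (B :: Γ) = parkAux Φ Γ from by simp [parkAux, hc], ih Φ h]
      congr 1
      simp only [epark, if_neg (show ¬ 1 ≤ (Φ.map Finset.card).sum - Φ.length + B.card by omega)]

lemma park_eq_epark {α : Type*} [DecidableEq α] (Γ : List (Finset α)) :
    park Γ = epark 0 Γ := by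
  simpa [park] using parkAux_eq Γ [] (by simp)

lemma epark_append {α : Type*} [DecidableEq α] (Γ₁ Γ₂ : List (Finset α)) :
    ∀ e, epark e (Γ₁ ++ Γ₂) = epark e Γ₁ ++ epark (fex e Γ₁) Γ₂ := by
  induction Γ₁ with
  | nil => intro e; simp [epark, fex]
  | cons B Γ ih =>
    intro e
    by_cases hc : 1 ≤ e + B.card
    · simp [epark, fex, hc, ih]
    · simp [epark, fex, hc, ih]

lemma fex_eq_zero {α : Type*} [DecidableEq α] (Γ : List (Finset α)) :
    ∀ e, e + (Γ.map Finset.card).sum ≤ Γ.length →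
    (∀ k, ((Γ.drop k).map Finset.card).sum ≤ Γ.length - k) →
    fex e Γ = 0 := by
  induction Γ with
  | nil => intro e h _; simpa [fex] using h
  | cons B Γ ih =>
    intro e h hsuf
    by_cases hc : 1 ≤ e + B.card
    · rw [show fex e (B :: Γ) = fex (e + B.card - 1) Γ from by simp [fex, hc]]
      refine ih _ (by simp at h ⊢; omega) (fun k => ?_)
      have := hsuf (k + 1)
      simpa using this
    · rw [show fex e (B :: Γ) = fex e Γ from by simp [fex, hc]]
      refine ih e ?_ (fun k => by simpa using hsuf (k + 1))
      have := hsuf 1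
      simp at this ⊢
      omega

lemma subset_foldr {α : Type*} [DecidableEq α] (L : List (Finset α)) (B : Finset α)
    (hB : B ∈ L) : B ⊆ L.foldr (· ∪ ·) ∅ := by
  induction L with
  | nil => simp at hB
  | cons C L ih =>
    rcases List.mem_cons.mp hB with h | h
    · subst h; exact Finset.subset_union_left
    · exact (ih h).trans Finset.subset_union_right

lemma disjoint_foldr {α : Type*} [DecidableEq α] (L : List (Finset α)) (B : Finset α)
    (h : ∀ C ∈ L, Disjoint B C) : Disjoint B (L.foldr (· ∪ ·) ∅) := by
  induction L with
  | nil => simp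
  | cons C L ih =>
    simp only [List.foldr_cons, Finset.disjoint_union_right]
    exact ⟨h C (by simp), ih fun D hD => h D (by simp [hD])⟩

lemma sum_card_eq {α : Type*} [DecidableEq α] (L : List (Finset α))
    (h : L.Pairwise Disjoint) : (L.map Finset.card).sum = (L.foldr (· ∪ ·) ∅).card := by
  induction L with
  | nil => simp
  | cons B L ih =>
    simp only [List.pairwise_cons] at h
    have hd : Disjoint B (L.foldr (· ∪ ·) ∅) := disjoint_foldr L B h.1
    simp [ih h.2, Finset.card_union_of_disjoint hd]

/-- Key: the restriction of a parking function has all suffix sums ≤ suffix lengths. -/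
lemma suffix_bound {α : Type*} [DecidableEq α] (S A : Finset α) (Φ : List (Finset α))
    (hΦ : IsParkingFunction S Φ) (k : ℕ) :
    (((Φ.map (· ∩ A)).drop k).map Finset.card).sum ≤ (Φ.map (· ∩ A)).length - k := by
  obtain ⟨⟨hpw, hun⟩, hlen, hpark⟩ := hΦ
  by_cases hk : k ≤ Φ.length
  · have h1 : (((Φ.map (· ∩ A)).drop k).map Finset.card).sum
        ≤ ((Φ.drop k).map Finset.card).sum := by
      rw [← List.map_drop, List.map_map]
      exact List.sum_le_sum fun b _ => Finset.card_le_card Finset.inter_subset_left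
    have h2 : ((Φ.take k).map Finset.card).sum + ((Φ.drop k).map Finset.card).sum
        = (Φ.map Finset.card).sum := by
      rw [← List.sum_append, ← List.map_append, List.take_append_drop]
    have h3 : (Φ.map Finset.card).sum = Φ.length := by
      rw [sum_card_eq Φ hpw, hun, hlen]
    have h4 : k ≤ ((Φ.take k).map Finset.card).sum := by
      rcases Nat.eq_zero_or_pos k with h | h
      · omega
      · exact hpark k h hk
    simp only [List.length_map]
    omega
  · rw [List.drop_eq_nil_of_le (by simpa using le_of_not_ge hk)]
    simp

lemma fex_zero_restrict {α : Type*} [DecidableEq α] (S A : Finset α) (Φ : List (Finset α))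
    (hΦ : IsParkingFunction S Φ) : fex 0 (Φ.map (· ∩ A)) = 0 := by
  refine fex_eq_zero _ 0 (by simpa using suffix_bound S A Φ hΦ 0) (suffix_bound S A Φ hΦ)

theorem park_concat_restrict {α : Type*} [DecidableEq α]
    (S T S' : Finset α) (hST : Disjoint S T) (hS' : S' ⊆ S ∪ T)
    (Φ Ψ : List (Finset α))
    (hΦ : IsParkingFunction S Φ) (hΨ : IsParkingFunction T Ψ) :
    park ((Φ ++ Ψ).map (· ∩ S')) =
      park (Φ.map (· ∩ (S ∩ S'))) ++ park (Ψ.map (· ∩ (T ∩ S'))) := by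
  have hΦS : ∀ B ∈ Φ, B ∩ S' = B ∩ (S ∩ S') := by
    intro B hB
    have : B ⊆ S := hΦ.1.2 ▸ subset_foldr Φ B hB
    rw [← Finset.inter_assoc, Finset.inter_eq_left.mpr this]
  have hΨT : ∀ B ∈ Ψ, B ∩ S' = B ∩ (T ∩ S') := by
    intro B hB
    have : B ⊆ T := hΨ.1.2 ▸ subset_foldr Ψ B hB
    rw [← Finset.inter_assoc, Finset.inter_eq_left.mpr this]
  rw [List.map_append, List.map_congr_left hΦS, List.map_congr_left hΨT,
    park_eq_epark, epark_append, fex_zero_restrict S (S ∩ S') Φ hΦ,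
    ← park_eq_epark, ← park_eq_epark]
end

section
/- Let I = S ⊔ T be a decomposition of a finite set into disjoint subsets, and let Δ_{S,T} be the linear map from the free ℚ-vector space on permutations of I to the tensor product of the free ℚ-vector spaces on permutations of S and on permutations of T, determined on basis elements by τ ↦ τ|_S ⊗ τ|_T. Then for every permutation σ of I: Δ_{S,T}(p_σ) = p_{σ|_S} ⊗ p_{σ|_T} if every σ-orbit is contained in S or in T (equivalently, σ|_S ⊎ σ|_T = σ), and Δ_{S,T}(p_σ) = 0 otherwise. -/
/-!
STATEMENT 12: Let `I = S ⊔ T` and let `Δ_{S,T}` be the linear map determined on basis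
permutations by `τ ↦ τ|_S ⊗ τ|_T` (first-return restrictions).  Then for a permutation
`σ` of `I`: if every `σ`-orbit is contained in `S` or in `T`, then
`Δ_{S,T}(p_σ) = p_{σ|_S} ⊗ p_{σ|_T}`, and otherwise `Δ_{S,T}(p_σ) = 0`.  Here `p_σ` is
the powersum element associated with a Möbius function `μ̈` of the restriction order,
permutations of a finite subset of `α` are encoded as permutations of `α` fixing the
complement pointwise, and free vector spaces as `Equiv.Perm α →₀ ℚ`.
-/

open scoped Classical TensorProduct

variable {α : Type*} [Fintype α] [DecidableEq α]

set_option linter.unusedSectionVars false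

/-- For `a ∈ S`, there is `k ≥ 1` with `σ^k a ∈ S` (the orbit of `a` returns to `S`). -/
lemma exists_return (σ : Equiv.Perm α) (S : Finset α) {a : α} (ha : a ∈ S) :
    ∃ k : ℕ, 0 < k ∧ (σ ^ k) a ∈ S :=
  ⟨orderOf σ, orderOf_pos σ, by rw [pow_orderOf_eq_one]; simpa using ha⟩

/-- The first-return map of `σ` to `S`, as a function on `α`: a point `a ∈ S` is sent to
`σ^k a` where `k ≥ 1` is minimal with `σ^k a ∈ S`, and points outside `S` are fixed. -/
def frFun (σ : Equiv.Perm α) (S : Finset α) (a : α) : α :=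
  if h : a ∈ S then (σ ^ Nat.find (exists_return σ S h)) a else a

lemma frFun_mem (σ : Equiv.Perm α) (S : Finset α) {a : α} (ha : a ∈ S) :
    frFun σ S a ∈ S := by
  rw [frFun, dif_pos ha]
  exact (Nat.find_spec (exists_return σ S ha)).2

private lemma frFun_inj_aux (σ : Equiv.Perm α) (S : Finset α) {a b : α}
    (ha : a ∈ S) (hb : b ∈ S)
    (hle : Nat.find (exists_return σ S ha) ≤ Nat.find (exists_return σ S hb))
    (hab : (σ ^ Nat.find (exists_return σ S ha)) a
          = (σ ^ Nat.find (exists_return σ S hb)) b) :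
    a = b := by
  set ka := Nat.find (exists_return σ S ha) with hka
  set kb := Nat.find (exists_return σ S hb) with hkb
  have hk : kb = ka + (kb - ka) := by omega
  have h1 : (σ ^ ka) a = (σ ^ ka) ((σ ^ (kb - ka)) b) := by
    rw [hab]
    conv_lhs => rw [hk]
    rw [pow_add, Equiv.Perm.mul_apply]
  have h2 : a = (σ ^ (kb - ka)) b := (σ ^ ka).injective h1
  rcases Nat.eq_zero_or_pos (kb - ka) with h0 | h0
  · rw [h0, pow_zero] at h2
    simpa using h2
  · exfalso
    have hlt : kb - ka < kb := by
      have hka0 : 0 < ka := (Nat.find_spec (exists_return σ S ha)).1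
      omega
    have := Nat.find_min (exists_return σ S hb) hlt
    exact this ⟨h0, h2 ▸ ha⟩

lemma frFun_injective (σ : Equiv.Perm α) (S : Finset α) :
    Function.Injective (frFun σ S) := by
  intro a b hab
  by_cases ha : a ∈ S <;> by_cases hb : b ∈ S
  · rw [frFun, dif_pos ha, frFun, dif_pos hb] at hab
    rcases le_total (Nat.find (exists_return σ S ha)) (Nat.find (exists_return σ S hb))
      with h | h
    · exact frFun_inj_aux σ S ha hb h hab
    · exact (frFun_inj_aux σ S hb ha h hab.symm).symm
  · exfalso
    have := frFun_mem σ S ha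
    rw [hab, frFun, dif_neg hb] at this
    exact hb this
  · exfalso
    have := frFun_mem σ S hb
    rw [← hab, frFun, dif_neg ha] at this
    exact ha this
  · rwa [frFun, dif_neg ha, frFun, dif_neg hb] at hab

/-- The induced (first-return) permutation `σ|_S` of `σ` on `S`, extended by the identity
outside of `S`. -/
noncomputable def frPerm (σ : Equiv.Perm α) (S : Finset α) : Equiv.Perm α :=
  Equiv.ofBijective (frFun σ S)
    ((Finite.injective_iff_bijective).mp (frFun_injective σ S))


/-- The restriction order on permutations: `RestrLE τ σ` holds iff every `τ`-orbit is
contained in a `σ`-orbit and `τ` acts on each of its orbits as the first-return map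
of `σ`. -/
def RestrLE (τ σ : Equiv.Perm α) : Prop :=
  (∀ a b : α, τ.SameCycle a b → σ.SameCycle a b) ∧
  ∀ a : α, ∃ k : ℕ, 0 < k ∧ τ a = (σ ^ k) a ∧
    ∀ j : ℕ, 0 < j → j < k → ¬ τ.SameCycle a ((σ ^ j) a)

/-- The powersum element `p_σ = Σ_{τ ≤ σ} μ̈(τ, σ) · τ` in the free vector space on
permutations, for a given Möbius function `mu` of the restriction order. -/
noncomputable def powersum (mu : Equiv.Perm α → Equiv.Perm α → ℚ) (σ : Equiv.Perm α) :
    Equiv.Perm α →₀ ℚ :=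
  ∑ τ ∈ Finset.univ.filter (fun τ => RestrLE τ σ), Finsupp.single τ (mu τ σ)

/-- The coproduct `Δ_{S,T}`: the linear map determined on basis permutations by
`τ ↦ τ|_S ⊗ τ|_T`, where `τ|_S` is the induced (first-return) permutation. -/
noncomputable def DeltaST (S T : Finset α) (p : Equiv.Perm α →₀ ℚ) :
    (Equiv.Perm α →₀ ℚ) ⊗[ℚ] (Equiv.Perm α →₀ ℚ) :=
  p.sum fun τ c =>
    c • (Finsupp.single (frPerm τ S) (1 : ℚ) ⊗ₜ[ℚ] Finsupp.single (frPerm τ T) (1 : ℚ))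

/-- Shortcut instance: the zero of the tensor product (definitionally the one coming from
its additive monoid structure); stated to help instance synthesis. -/
noncomputable instance :
    Zero ((Equiv.Perm α →₀ ℚ) ⊗[ℚ] (Equiv.Perm α →₀ ℚ)) := AddMonoid.toZero

-- basic SameCycle nat lemmas
lemma sameCycle_of_pow (σ : Equiv.Perm α) (a : α) (n : ℕ) : σ.SameCycle a ((σ ^ n) a) :=
  ⟨(n : ℤ), by simp [zpow_natCast]⟩

lemma sameCycle_exists_pow {σ : Equiv.Perm α} {a b : α} (h : σ.SameCycle a b) :
    ∃ n : ℕ, (σ ^ n) a = b := by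
  obtain ⟨i, _, hi⟩ := h.exists_pow_eq'
  exact ⟨i, hi⟩

lemma exists_min_pow (τ : Equiv.Perm α) (P : α → Prop) (a : α) (hPa : P a) :
    ∃ j, 0 < j ∧ P ((τ ^ j) a) ∧ ∀ i, 0 < i → i < j → ¬ P ((τ ^ i) a) := by
  have hex : ∃ j, 0 < j ∧ P ((τ ^ j) a) :=
    ⟨orderOf τ, orderOf_pos τ, by rw [pow_orderOf_eq_one]; simpa using hPa⟩
  classical
  refine ⟨Nat.find hex, (Nat.find_spec hex).1, (Nat.find_spec hex).2, fun i h1 h2 hP => ?_⟩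
  exact Nat.find_min hex h2 ⟨h1, hP⟩

/-- Return enumeration lemma. -/
lemma ret {τ σ : Equiv.Perm α} (h : RestrLE τ σ) (a : α) (j : ℕ) :
    ∃ k, j ≤ k ∧ (σ ^ k) a = (τ ^ j) a ∧
      ∀ i, 0 < i → i ≤ k → τ.SameCycle a ((σ ^ i) a) →
        ∃ j', 0 < j' ∧ j' ≤ j ∧ (σ ^ i) a = (τ ^ j') a := by
  induction j with
  | zero => exact ⟨0, le_rfl, by simp, fun i h1 h2 _ => absurd h2 (by omega)⟩
  | succ j ih =>
    obtain ⟨k, hjk, hk, henum⟩ := ih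
    obtain ⟨m, hm0, hmτ, hmmin⟩ := h.2 ((τ ^ j) a)
    have hstep : (σ ^ (k + m)) a = (τ ^ (j + 1)) a := by
      have h1 : (σ ^ (k + m)) a = (σ ^ m) ((σ ^ k) a) := by
        rw [add_comm, pow_add, Equiv.Perm.mul_apply]
      rw [h1, hk, ← hmτ, ← Equiv.Perm.mul_apply, ← pow_succ']
    refine ⟨k + m, by omega, hstep, ?_⟩
    intro i h1 h2 hsc
    rcases le_or_gt i k with hik | hik
    · obtain ⟨j', hj1, hj2, hj3⟩ := henum i h1 hik hsc
      exact ⟨j', hj1, by omega, hj3⟩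
    · have hdec : (σ ^ i) a = (σ ^ (i - k)) ((τ ^ j) a) := by
        have hik' : i - k + k = i := by omega
        rw [← hk, ← Equiv.Perm.mul_apply, ← pow_add, hik']
      rcases lt_or_ge (i - k) m with hd | hd
      · exfalso
        refine hmmin (i - k) (by omega) hd ?_
        rw [← hdec]
        exact ((sameCycle_of_pow τ a j).symm.trans hsc)
      · have him : i = k + m := by omega
        exact ⟨j + 1, by omega, le_rfl, him ▸ hstep⟩

/-- First-return indices agree between `τ` and `σ` when `τ ≤ σ`. -/
lemma first_return_eq {τ σ : Equiv.Perm α} (h : RestrLE τ σ) (a : α) (P : α → Prop)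
    (hP : ∀ b, P b → τ.SameCycle a b) {j k : ℕ}
    (hj0 : 0 < j) (hPj : P ((τ ^ j) a)) (hjmin : ∀ i, 0 < i → i < j → ¬ P ((τ ^ i) a))
    (hk0 : 0 < k) (hPk : P ((σ ^ k) a)) (hkmin : ∀ i, 0 < i → i < k → ¬ P ((σ ^ i) a)) :
    (σ ^ k) a = (τ ^ j) a := by
  obtain ⟨K, hK1, hK2, hKenum⟩ := ret h a j
  have hkK : k ≤ K := by
    by_contra hc
    exact hkmin K (by omega) (by omega) (hK2 ▸ hPj)
  obtain ⟨j', hj'1, hj'2, hj'3⟩ := hKenum k hk0 hkK (hP _ hPk)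
  rcases lt_or_eq_of_le hj'2 with hlt | heq
  · exact absurd (hj'3 ▸ hPk) (hjmin j' hj'1 hlt)
  · rw [hj'3, heq]


lemma frPerm_apply (τ : Equiv.Perm α) (S : Finset α) (a : α) :
    frPerm τ S a = frFun τ S a := rfl

lemma frPerm_apply_not_mem (τ : Equiv.Perm α) (S : Finset α) {a : α} (ha : a ∉ S) :
    frPerm τ S a = a := by
  rw [frPerm_apply, frFun, dif_neg ha]

lemma frPerm_apply_mem (τ : Equiv.Perm α) (S : Finset α) {a : α} (ha : a ∈ S) :
    frPerm τ S a ∈ S := frFun_mem τ S ha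

lemma frPerm_pow_not_mem (τ : Equiv.Perm α) (S : Finset α) {a : α} (ha : a ∉ S) (n : ℕ) :
    ((frPerm τ S) ^ n) a = a := by
  induction n with
  | zero => simp
  | succ n ih => rw [pow_succ, Equiv.Perm.mul_apply, frPerm_apply_not_mem τ S ha, ih]

lemma frPerm_sameCycle_not_mem (τ : Equiv.Perm α) (S : Finset α) {a b : α} (ha : a ∉ S)
    (h : (frPerm τ S).SameCycle a b) : b = a := by
  obtain ⟨n, hn⟩ := sameCycle_exists_pow h
  rw [← hn, frPerm_pow_not_mem τ S ha]

lemma frPerm_pow_mem (τ : Equiv.Perm α) (S : Finset α) {a : α} (ha : a ∈ S) (n : ℕ) :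
    ∃ j : ℕ, ((frPerm τ S) ^ n) a = (τ ^ j) a ∧ ((frPerm τ S) ^ n) a ∈ S := by
  induction n with
  | zero => exact ⟨0, by simp, by simpa using ha⟩
  | succ n ih =>
    obtain ⟨j, hj, hmem⟩ := ih
    have key : frPerm τ S (((frPerm τ S) ^ n) a)
        = (τ ^ (Nat.find (exists_return τ S hmem) + j)) a := by
      rw [frPerm_apply, frFun, dif_pos hmem, pow_add, Equiv.Perm.mul_apply, ← hj]
    exact ⟨_, by rw [pow_succ', Equiv.Perm.mul_apply, key],
      by rw [pow_succ', Equiv.Perm.mul_apply, key, ← key]; exact frPerm_apply_mem τ S hmem⟩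

/-- Lemma B: the orbit of the first-return permutation on `S` at `a ∈ S` is the
intersection of the `τ`-orbit with `S`. -/
lemma frPerm_sameCycle_iff (τ : Equiv.Perm α) (S : Finset α) {a : α} (ha : a ∈ S) (b : α) :
    (frPerm τ S).SameCycle a b ↔ b ∈ S ∧ τ.SameCycle a b := by
  constructor
  · intro h
    obtain ⟨n, hn⟩ := sameCycle_exists_pow h
    obtain ⟨j, hj, hmem⟩ := frPerm_pow_mem τ S ha n
    exact ⟨hn ▸ hmem, hn ▸ hj ▸ sameCycle_of_pow τ a j⟩
  · rintro ⟨hbS, hsc⟩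
    obtain ⟨n, hn⟩ := sameCycle_exists_pow hsc
    suffices h : ∀ n, (τ ^ n) a ∈ S → ∃ m : ℕ, ((frPerm τ S) ^ m) a = (τ ^ n) a by
      obtain ⟨m, hm⟩ := h n (hn ▸ hbS)
      exact ⟨m, by rw [zpow_natCast, hm, hn]⟩
    intro n
    induction n using Nat.strong_induction_on with
    | _ n ih =>
      intro hnS
      rcases Nat.eq_zero_or_pos n with h0 | h0
      · exact ⟨0, by simp [h0]⟩
      · set P := fun i => (τ ^ i) a ∈ S with hP
        set n' := Nat.findGreatest P (n - 1) with hn'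
        have hn'le : n' ≤ n - 1 := Nat.findGreatest_le _
        have hn'P : P n' := Nat.findGreatest_spec (Nat.zero_le _) (by simpa [hP] using ha)
        obtain ⟨m, hm⟩ := ih n' (by omega) hn'P
        have hfr : frPerm τ S ((τ ^ n') a) = (τ ^ n) a := by
          rw [frPerm_apply, frFun, dif_pos hn'P]
          have hfind : Nat.find (exists_return τ S hn'P) = n - n' := by
            rw [Nat.find_eq_iff]
            constructor
            · refine ⟨by omega, ?_⟩
              rw [← Equiv.Perm.mul_apply, ← pow_add]
              have : n - n' + n' = n := by omega
              rw [this]; exact hnS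
            · intro i hi
              rintro ⟨hi0, himem⟩
              have hiP : P (i + n') := by
                rw [hP]
                simpa [← Equiv.Perm.mul_apply, ← pow_add] using himem
              exact Nat.findGreatest_is_greatest (k := i + n') (n := n - 1) (by omega) (by omega) hiP
          rw [hfind, ← Equiv.Perm.mul_apply, ← pow_add]
          have : n - n' + n' = n := by omega
          rw [this]
        exact ⟨m + 1, by rw [pow_succ', Equiv.Perm.mul_apply, hm, hfr]⟩

lemma restrLE_refl (σ : Equiv.Perm α) : RestrLE σ σ :=
  ⟨fun _ _ h => h, fun a => ⟨1, one_pos, by simp, fun j h1 h2 => absurd h2 (by omega)⟩⟩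

lemma restrLE_trans {υ τ σ : Equiv.Perm α} (h1 : RestrLE υ τ) (h2 : RestrLE τ σ) :
    RestrLE υ σ := by
  refine ⟨fun a b h => h2.1 a b (h1.1 a b h), fun a => ?_⟩
  obtain ⟨j, hj0, hjeq, hjmin⟩ := h1.2 a
  set P := fun b => υ.SameCycle a b with hPdef
  have hPj : P ((τ ^ j) a) := hjeq ▸ ⟨1, by simp⟩
  obtain ⟨k, hk0, hPk, hkmin⟩ := exists_min_pow σ P a ⟨0, by simp⟩
  have := first_return_eq h2 a P (fun b hb => h1.1 a b hb) hj0 hPj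
    (fun i hi1 hi2 => hjmin i hi1 hi2) hk0 hPk hkmin
  exact ⟨k, hk0, by rw [hjeq, ← this], fun i hi1 hi2 => hkmin i hi1 hi2⟩

lemma restrLE_antisymm {τ σ : Equiv.Perm α} (h1 : RestrLE τ σ) (h2 : RestrLE σ τ) :
    τ = σ := by
  ext a
  obtain ⟨k, hk0, hkeq, hkmin⟩ := h1.2 a
  rcases Nat.lt_or_ge k 2 with hk | hk
  · have : k = 1 := by omega
    rw [hkeq, this, pow_one]
  · exact absurd (h2.1 a (σ a) ⟨1, by simp⟩) (by simpa using hkmin 1 one_pos (by omega))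

lemma fixed_restr_data {ρ τ : Equiv.Perm α} {a : α} (h1 : ρ a = a)
    (h2 : ∀ b, ρ.SameCycle a b → b = a) :
    ∃ k : ℕ, 0 < k ∧ ρ a = (τ ^ k) a ∧
      ∀ j : ℕ, 0 < j → j < k → ¬ ρ.SameCycle a ((τ ^ j) a) := by
  obtain ⟨k, hk0, hPk, hkmin⟩ := exists_min_pow τ (fun b => b = a) a rfl
  exact ⟨k, hk0, by rw [h1, hPk], fun j hj1 hj2 hsc => hkmin j hj1 hj2 (h2 _ hsc)⟩

lemma fr_le (τ : Equiv.Perm α) (S : Finset α) : RestrLE (frPerm τ S) τ := by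
  constructor
  · intro a b h
    by_cases ha : a ∈ S
    · exact ((frPerm_sameCycle_iff τ S ha b).mp h).2
    · rw [frPerm_sameCycle_not_mem τ S ha h]
  · intro a
    by_cases ha : a ∈ S
    · refine ⟨Nat.find (exists_return τ S ha), (Nat.find_spec (exists_return τ S ha)).1,
        by rw [frPerm_apply, frFun, dif_pos ha], fun j hj1 hj2 hsc => ?_⟩
      have := ((frPerm_sameCycle_iff τ S ha _).mp hsc).1
      exact Nat.find_min (exists_return τ S ha) hj2 ⟨hj1, this⟩
    · exact fixed_restr_data (frPerm_apply_not_mem τ S ha)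
        (fun b hb => frPerm_sameCycle_not_mem τ S ha hb)

lemma fr_mono {τ σ : Equiv.Perm α} (S : Finset α) (h : RestrLE τ σ) :
    RestrLE (frPerm τ S) (frPerm σ S) := by
  constructor
  · intro a b hab
    by_cases ha : a ∈ S
    · obtain ⟨hbS, hsc⟩ := (frPerm_sameCycle_iff τ S ha b).mp hab
      exact (frPerm_sameCycle_iff σ S ha b).mpr ⟨hbS, h.1 a b hsc⟩
    · rw [frPerm_sameCycle_not_mem τ S ha hab]
  · intro a
    by_cases ha : a ∈ S
    · set P := fun b => b ∈ S ∧ τ.SameCycle a b with hPdef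
      set j := Nat.find (exists_return τ S ha) with hjdef
      have hj0 : 0 < j := (Nat.find_spec (exists_return τ S ha)).1
      have hPj : P ((τ ^ j) a) := ⟨(Nat.find_spec (exists_return τ S ha)).2,
        sameCycle_of_pow τ a j⟩
      have hjmin : ∀ i, 0 < i → i < j → ¬ P ((τ ^ i) a) := fun i hi1 hi2 hP =>
        Nat.find_min (exists_return τ S ha) hi2 ⟨hi1, hP.1⟩
      -- minimal k for frPerm σ S
      obtain ⟨k, hk0, hPk, hkmin⟩ := exists_min_pow (frPerm σ S) P a ⟨ha, ⟨0, by simp⟩⟩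
      -- minimal k' for σ
      obtain ⟨k', hk'0, hPk', hk'min⟩ := exists_min_pow σ P a ⟨ha, ⟨0, by simp⟩⟩
      have e1 : (σ ^ k') a = ((frPerm σ S) ^ k) a :=
        first_return_eq (fr_le σ S) a P
          (fun b hb => (frPerm_sameCycle_iff σ S ha b).mpr ⟨hb.1, h.1 a b hb.2⟩)
          hk0 hPk hkmin hk'0 hPk' hk'min
      have e2 : (σ ^ k') a = (τ ^ j) a :=
        first_return_eq h a P (fun b hb => hb.2) hj0 hPj hjmin hk'0 hPk' hk'min
      refine ⟨k, hk0, ?_, fun i hi1 hi2 hsc => ?_⟩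
      · rw [frPerm_apply, frFun, dif_pos ha, ← hjdef, ← e2, e1]
      · exact hkmin i hi1 hi2 ((frPerm_sameCycle_iff τ S ha _).mp hsc)
    · refine ⟨1, one_pos, ?_, fun j h1 h2 => absurd h2 (by omega)⟩
      rw [frPerm_apply_not_mem τ S ha, pow_one, frPerm_apply_not_mem σ S ha]


section prod
variable {S T : Finset α} {f g f' g' : Equiv.Perm α}

lemma supp_mem (hf : ∀ a ∉ S, f a = a) {a : α} (ha : a ∈ S) : f a ∈ S := by
  by_contra hc
  have h2 : f a = a := f.injective (hf (f a) hc)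
  rw [h2] at hc
  exact hc ha

lemma fix_pow (hf : ∀ a ∉ S, f a = a) {a : α} (ha : a ∉ S) (n : ℕ) : (f ^ n) a = a := by
  induction n with
  | zero => simp
  | succ n ih => rw [pow_succ, Equiv.Perm.mul_apply, hf a ha, ih]

lemma fix_sameCycle (hf : ∀ a ∉ S, f a = a) {a b : α} (ha : a ∉ S)
    (h : f.SameCycle a b) : b = a := by
  obtain ⟨n, hn⟩ := sameCycle_exists_pow h
  rw [← hn, fix_pow hf ha]

lemma supp_of_le (hρ : RestrLE f' f) (hf : ∀ a ∉ S, f a = a) : ∀ a ∉ S, f' a = a :=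
  fun a ha => fix_sameCycle hf ha (hρ.1 a (f' a) ⟨1, by simp⟩)

lemma supp_pow_mem (hf : ∀ a ∉ S, f a = a) {a : α} (ha : a ∈ S) (n : ℕ) : (f ^ n) a ∈ S := by
  induction n with
  | zero => simpa
  | succ n ih => rw [pow_succ', Equiv.Perm.mul_apply]; exact supp_mem hf ih

lemma mul_pow_left (hf : ∀ a ∉ S, f a = a) (hg : ∀ a ∉ T, g a = a) (hd : Disjoint S T)
    {a : α} (ha : a ∈ S) (n : ℕ) : ((f * g) ^ n) a = (f ^ n) a := by
  induction n with
  | zero => simp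
  | succ n ih =>
    rw [pow_succ', pow_succ', Equiv.Perm.mul_apply, Equiv.Perm.mul_apply, ih,
      Equiv.Perm.mul_apply]
    have hmem : (f ^ n) a ∈ S := supp_pow_mem hf ha n
    rw [hg _ (Finset.disjoint_left.mp hd hmem)]

lemma mul_pow_right (hf : ∀ a ∉ S, f a = a) (hg : ∀ a ∉ T, g a = a) (hd : Disjoint S T)
    {a : α} (ha : a ∈ T) (n : ℕ) : ((f * g) ^ n) a = (g ^ n) a := by
  induction n with
  | zero => simp
  | succ n ih =>
    rw [pow_succ', pow_succ', Equiv.Perm.mul_apply, Equiv.Perm.mul_apply, ih,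
      Equiv.Perm.mul_apply]
    have hmem : g ((g ^ n) a) ∈ T := supp_mem hg (supp_pow_mem hg ha n)
    rw [hf _ (Finset.disjoint_right.mp hd hmem)]

lemma mul_pow_out (hf : ∀ a ∉ S, f a = a) (hg : ∀ a ∉ T, g a = a)
    {a : α} (haS : a ∉ S) (haT : a ∉ T) (n : ℕ) : ((f * g) ^ n) a = a := by
  have : (f * g) a = a := by rw [Equiv.Perm.mul_apply, hg a haT, hf a haS]
  induction n with
  | zero => simp
  | succ n ih => rw [pow_succ, Equiv.Perm.mul_apply, this, ih]

lemma mul_sameCycle_left (hf : ∀ a ∉ S, f a = a) (hg : ∀ a ∉ T, g a = a) (hd : Disjoint S T)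
    {a b : α} (ha : a ∈ S) : (f * g).SameCycle a b ↔ f.SameCycle a b := by
  constructor
  · intro h
    obtain ⟨n, hn⟩ := sameCycle_exists_pow h
    rw [← hn, mul_pow_left hf hg hd ha n]
    exact sameCycle_of_pow f a n
  · intro h
    obtain ⟨n, hn⟩ := sameCycle_exists_pow h
    rw [← hn, ← mul_pow_left hf hg hd ha n]
    exact sameCycle_of_pow _ a n

lemma mul_sameCycle_right (hf : ∀ a ∉ S, f a = a) (hg : ∀ a ∉ T, g a = a) (hd : Disjoint S T)
    {a b : α} (ha : a ∈ T) : (f * g).SameCycle a b ↔ g.SameCycle a b := by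
  constructor
  · intro h
    obtain ⟨n, hn⟩ := sameCycle_exists_pow h
    rw [← hn, mul_pow_right hf hg hd ha n]
    exact sameCycle_of_pow g a n
  · intro h
    obtain ⟨n, hn⟩ := sameCycle_exists_pow h
    rw [← hn, ← mul_pow_right hf hg hd ha n]
    exact sameCycle_of_pow _ a n

lemma mul_sameCycle_out (hf : ∀ a ∉ S, f a = a) (hg : ∀ a ∉ T, g a = a)
    {a b : α} (haS : a ∉ S) (haT : a ∉ T) (h : (f * g).SameCycle a b) : b = a := by
  obtain ⟨n, hn⟩ := sameCycle_exists_pow h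
  rw [← hn, mul_pow_out hf hg haS haT]

/-- Claim C: products of restrictions with disjoint supports. -/
lemma prod_le (hd : Disjoint S T)
    (hf : ∀ a ∉ S, f a = a) (hg : ∀ a ∉ T, g a = a)
    (hf' : ∀ a ∉ S, f' a = a) (hg' : ∀ a ∉ T, g' a = a)
    (h1 : RestrLE f' f) (h2 : RestrLE g' g) : RestrLE (f' * g') (f * g) := by
  constructor
  · intro a b hab
    by_cases haS : a ∈ S
    · exact (mul_sameCycle_left hf hg hd haS).mpr
        (h1.1 a b ((mul_sameCycle_left hf' hg' hd haS).mp hab))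
    by_cases haT : a ∈ T
    · exact (mul_sameCycle_right hf hg hd haT).mpr
        (h2.1 a b ((mul_sameCycle_right hf' hg' hd haT).mp hab))
    · rw [mul_sameCycle_out hf' hg' haS haT hab]
  · intro a
    by_cases haS : a ∈ S
    · obtain ⟨k, hk0, hkeq, hkmin⟩ := h1.2 a
      refine ⟨k, hk0, ?_, fun j hj1 hj2 hsc => ?_⟩
      · rw [mul_pow_left hf hg hd haS, Equiv.Perm.mul_apply,
          hg' a (Finset.disjoint_left.mp hd haS), hkeq]
      · rw [mul_pow_left hf hg hd haS] at hsc
        exact hkmin j hj1 hj2 ((mul_sameCycle_left hf' hg' hd haS).mp hsc)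
    by_cases haT : a ∈ T
    · obtain ⟨k, hk0, hkeq, hkmin⟩ := h2.2 a
      refine ⟨k, hk0, ?_, fun j hj1 hj2 hsc => ?_⟩
      · rw [mul_pow_right hf hg hd haT, Equiv.Perm.mul_apply, ← hkeq,
          hf' _ (Finset.disjoint_right.mp hd (supp_mem hg' haT))]
      · rw [mul_pow_right hf hg hd haT] at hsc
        exact hkmin j hj1 hj2 ((mul_sameCycle_right hf' hg' hd haT).mp hsc)
    · refine ⟨1, one_pos, ?_, fun j h1 h2 => absurd h2 (by omega)⟩
      rw [pow_one, Equiv.Perm.mul_apply, Equiv.Perm.mul_apply,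
        hg' a haT, hf' a haS, hg a haT, hf a haS]

lemma fr_mul_left (hd : Disjoint S T)
    (hf : ∀ a ∉ S, f a = a) (hg : ∀ a ∉ T, g a = a) : frPerm (f * g) S = f := by
  ext a
  by_cases ha : a ∈ S
  · rw [frPerm_apply, frFun, dif_pos ha]
    have h1 : ((f * g) ^ 1) a ∈ S := by
      rw [pow_one, Equiv.Perm.mul_apply, hg a (Finset.disjoint_left.mp hd ha)]
      exact supp_mem hf ha
    have hfind : Nat.find (exists_return (f * g) S ha) = 1 :=
      le_antisymm (Nat.find_min' _ ⟨one_pos, h1⟩) (Nat.find_spec (exists_return (f * g) S ha)).1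
    rw [hfind, pow_one, Equiv.Perm.mul_apply, hg a (Finset.disjoint_left.mp hd ha)]
  · rw [frPerm_apply_not_mem _ _ ha, hf a ha]

lemma fr_mul_right (hd : Disjoint S T)
    (hf : ∀ a ∉ S, f a = a) (hg : ∀ a ∉ T, g a = a) : frPerm (f * g) T = g := by
  ext a
  by_cases ha : a ∈ T
  · rw [frPerm_apply, frFun, dif_pos ha]
    have h1 : ((f * g) ^ 1) a ∈ T := by
      rw [pow_one, Equiv.Perm.mul_apply]
      have := supp_mem hg ha
      rw [hf _ (Finset.disjoint_right.mp hd this)]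
      exact this
    have hfind : Nat.find (exists_return (f * g) T ha) = 1 :=
      le_antisymm (Nat.find_min' _ ⟨one_pos, h1⟩) (Nat.find_spec (exists_return (f * g) T ha)).1
    rw [hfind, pow_one, Equiv.Perm.mul_apply]
    have := supp_mem hg ha
    rw [hf _ (Finset.disjoint_right.mp hd this)]
  · rw [frPerm_apply_not_mem _ _ ha, hg a ha]

end prod


noncomputable def splitP (S T : Finset α) (τ : Equiv.Perm α) : Equiv.Perm α :=
  frPerm τ S * frPerm τ T

section split
variable {S T : Finset α} (hd : Disjoint S T) {τ σ u : Equiv.Perm α}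

lemma frS_supp (τ : Equiv.Perm α) (S : Finset α) : ∀ a ∉ S, frPerm τ S a = a :=
  fun a ha => frPerm_apply_not_mem τ S ha

include hd

lemma splitP_sameCycle_left {a b : α} (ha : a ∈ S) :
    (splitP S T τ).SameCycle a b ↔ b ∈ S ∧ τ.SameCycle a b := by
  rw [splitP, mul_sameCycle_left (frS_supp τ S) (frS_supp τ T) hd ha,
    frPerm_sameCycle_iff τ S ha]

lemma splitP_sameCycle_right {a b : α} (ha : a ∈ T) :
    (splitP S T τ).SameCycle a b ↔ b ∈ T ∧ τ.SameCycle a b := by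
  rw [splitP, mul_sameCycle_right (frS_supp τ S) (frS_supp τ T) hd ha,
    frPerm_sameCycle_iff τ T ha]

lemma splitP_sameCycle_out {a b : α} (haS : a ∉ S) (haT : a ∉ T)
    (h : (splitP S T τ).SameCycle a b) : b = a :=
  mul_sameCycle_out (frS_supp τ S) (frS_supp τ T) haS haT h

lemma splitP_le : RestrLE (splitP S T τ) τ := by
  constructor
  · intro a b hab
    by_cases haS : a ∈ S
    · exact ((splitP_sameCycle_left hd haS).mp hab).2
    by_cases haT : a ∈ T
    · exact ((splitP_sameCycle_right hd haT).mp hab).2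
    · rw [splitP_sameCycle_out hd haS haT hab]
  · intro a
    by_cases haS : a ∈ S
    · obtain ⟨k, hk0, hkeq, hkmin⟩ := (fr_le τ S).2 a
      refine ⟨k, hk0, ?_, fun j hj1 hj2 hsc => ?_⟩
      · rw [splitP, Equiv.Perm.mul_apply,
          frS_supp τ T a (Finset.disjoint_left.mp hd haS), hkeq]
      · refine hkmin j hj1 hj2 ?_
        rw [frPerm_sameCycle_iff τ S haS]
        exact (splitP_sameCycle_left hd haS).mp hsc
    by_cases haT : a ∈ T
    · obtain ⟨k, hk0, hkeq, hkmin⟩ := (fr_le τ T).2 a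
      refine ⟨k, hk0, ?_, fun j hj1 hj2 hsc => ?_⟩
      · rw [splitP, Equiv.Perm.mul_apply, ← hkeq,
          frS_supp τ S _ (Finset.disjoint_right.mp hd (frPerm_apply_mem τ T haT))]
      · refine hkmin j hj1 hj2 ?_
        rw [frPerm_sameCycle_iff τ T haT]
        exact (splitP_sameCycle_right hd haT).mp hsc
    · refine fixed_restr_data ?_ (fun b hb => splitP_sameCycle_out hd haS haT hb)
      rw [splitP, Equiv.Perm.mul_apply, frS_supp τ T a haT, frS_supp τ S a haS]

lemma splitP_mono (h : RestrLE τ σ) : RestrLE (splitP S T τ) (splitP S T σ) :=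
  prod_le hd (frS_supp σ S) (frS_supp σ T) (frS_supp τ S) (frS_supp τ T)
    (fr_mono S h) (fr_mono T h)

lemma splitP_fix {a : α} (haS : a ∉ S) (haT : a ∉ T) : splitP S T τ a = a := by
  rw [splitP, Equiv.Perm.mul_apply, frS_supp τ T a haT, frS_supp τ S a haS]

/-- F12, the meet property. -/
lemma le_splitP (hτσ : RestrLE τ σ) (hus : RestrLE u (splitP S T σ))
    (huτ : RestrLE u τ) : RestrLE u (splitP S T τ) := by
  have horb : ∀ a b : α, u.SameCycle a b → (splitP S T τ).SameCycle a b := by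
    intro a b hab
    by_cases haS : a ∈ S
    · exact (splitP_sameCycle_left hd haS).mpr
        ⟨((splitP_sameCycle_left hd haS).mp (hus.1 a b hab)).1, huτ.1 a b hab⟩
    by_cases haT : a ∈ T
    · exact (splitP_sameCycle_right hd haT).mpr
        ⟨((splitP_sameCycle_right hd haT).mp (hus.1 a b hab)).1, huτ.1 a b hab⟩
    · rw [splitP_sameCycle_out hd haS haT (hus.1 a b hab)]
  refine ⟨horb, fun a => ?_⟩
  by_cases haST : a ∈ S ∨ a ∈ T
  · set P := fun b => u.SameCycle a b with hPdef
    obtain ⟨j, hj0, hjeq, hjmin⟩ := huτ.2 a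
    have hPj : P ((τ ^ j) a) := hjeq ▸ ⟨1, by simp⟩
    obtain ⟨k, hk0, hPk, hkmin⟩ := exists_min_pow (splitP S T τ) P a ⟨0, by simp⟩
    have e1 : (τ ^ j) a = ((splitP S T τ) ^ k) a :=
      first_return_eq (splitP_le hd) a P (fun b hb => horb a b hb)
        hk0 hPk hkmin hj0 hPj (fun i h1 h2 => hjmin i h1 h2)
    exact ⟨k, hk0, by rw [hjeq, e1], fun i h1 h2 => hkmin i h1 h2⟩
  · push_neg at haST
    have hfix : u a = a :=
      splitP_sameCycle_out hd haST.1 haST.2 (hus.1 a (u a) ⟨1, by simp⟩)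
    exact ⟨1, one_pos, by rw [hfix, pow_one, splitP_fix hd haST.1 haST.2],
      fun j h1 h2 => absurd h2 (by omega)⟩

lemma splitP_eq_self (hcyc : ∀ a b : α, τ.SameCycle a b → (a ∈ S → b ∈ S) ∧ (a ∈ T → b ∈ T))
    (hfix : ∀ a ∉ S ∪ T, τ a = a) : splitP S T τ = τ := by
  ext a
  by_cases haS : a ∈ S
  · rw [splitP, Equiv.Perm.mul_apply, frS_supp τ T a (Finset.disjoint_left.mp hd haS),
      frPerm_apply, frFun, dif_pos haS]
    have h1 : (τ ^ 1) a ∈ S := by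
      rw [pow_one]; exact (hcyc a (τ a) ⟨1, by simp⟩).1 haS
    have hfind : Nat.find (exists_return τ S haS) = 1 :=
      le_antisymm (Nat.find_min' _ ⟨one_pos, h1⟩) (Nat.find_spec (exists_return τ S haS)).1
    rw [hfind, pow_one]
  by_cases haT : a ∈ T
  · have hmem : frPerm τ T a ∈ T := frPerm_apply_mem τ T haT
    rw [splitP, Equiv.Perm.mul_apply, frS_supp τ S _ (Finset.disjoint_right.mp hd hmem),
      frPerm_apply, frFun, dif_pos haT]
    have h1 : (τ ^ 1) a ∈ T := by
      rw [pow_one]; exact (hcyc a (τ a) ⟨1, by simp⟩).2 haT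
    have hfind : Nat.find (exists_return τ T haT) = 1 :=
      le_antisymm (Nat.find_min' _ ⟨one_pos, h1⟩) (Nat.find_spec (exists_return τ T haT)).1
    rw [hfind, pow_one]
  · rw [splitP_fix hd haS haT, hfix a (by simp [haS, haT])]

lemma splitP_satisfies :
    ∀ a b : α, (splitP S T σ).SameCycle a b → (a ∈ S → b ∈ S) ∧ (a ∈ T → b ∈ T) := by
  intro a b hab
  by_cases haS : a ∈ S
  · exact ⟨fun _ => ((splitP_sameCycle_left hd haS).mp hab).1,
      fun haT => absurd haT (Finset.disjoint_left.mp hd haS)⟩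
  by_cases haT : a ∈ T
  · exact ⟨fun haS' => absurd haS' haS,
      fun _ => ((splitP_sameCycle_right hd haT).mp hab).1⟩
  · rw [splitP_sameCycle_out hd haS haT hab]
    exact ⟨fun h => h, fun h => h⟩

end split


lemma restrLE_one_le (σ : Equiv.Perm α) : RestrLE 1 σ := by
  refine ⟨fun a b h => ?_, fun a => ?_⟩
  · rw [Equiv.Perm.sameCycle_one] at h
    rw [← h]
  · exact fixed_restr_data rfl (fun b hb => (Equiv.Perm.sameCycle_one.mp hb).symm)

lemma frPerm_one (S : Finset α) : frPerm (1 : Equiv.Perm α) S = 1 := by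
  ext a
  by_cases ha : a ∈ S
  · rw [frPerm_apply, frFun, dif_pos ha]
    simp
  · rw [frPerm_apply_not_mem _ _ ha, Equiv.Perm.one_apply]

/-- Downward induction principle: functions satisfying the same interval-sum recursion and
agreeing at the top agree on the whole lower set. -/
lemma moebius_unique (σ : Equiv.Perm α) (f g : Equiv.Perm α → ℚ)
    (htop : f σ = g σ)
    (hrec : ∀ τ, RestrLE τ σ → τ ≠ σ →
      (∑ ρ ∈ Finset.univ.filter (fun ρ => RestrLE τ ρ ∧ RestrLE ρ σ), f ρ)
        = ∑ ρ ∈ Finset.univ.filter (fun ρ => RestrLE τ ρ ∧ RestrLE ρ σ), g ρ) :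
    ∀ τ, RestrLE τ σ → f τ = g τ := by
  have key : ∀ n : ℕ, ∀ τ, RestrLE τ σ →
      (Finset.univ.filter (fun ρ => RestrLE τ ρ ∧ RestrLE ρ σ ∧ ρ ≠ τ)).card ≤ n →
      f τ = g τ := by
    intro n
    induction n with
    | zero =>
      intro τ hτ hcard
      by_cases hts : τ = σ
      · rw [hts]; exact htop
      · exfalso
        have hm : σ ∈ Finset.univ.filter (fun ρ => RestrLE τ ρ ∧ RestrLE ρ σ ∧ ρ ≠ τ) := by
          simp only [Finset.mem_filter, Finset.mem_univ, true_and]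
          exact ⟨hτ, restrLE_refl σ, fun h => hts h.symm⟩
        have := Finset.card_pos.mpr ⟨σ, hm⟩
        omega
    | succ n ih =>
      intro τ hτ hcard
      by_cases hts : τ = σ
      · rw [hts]; exact htop
      have hρeq : ∀ ρ, RestrLE τ ρ → RestrLE ρ σ → ρ ≠ τ → f ρ = g ρ := by
        intro ρ h1 h2 h3
        refine ih ρ h2 ?_
        have hsub : Finset.univ.filter (fun x => RestrLE ρ x ∧ RestrLE x σ ∧ x ≠ ρ) ⊂
            Finset.univ.filter (fun x => RestrLE τ x ∧ RestrLE x σ ∧ x ≠ τ) := by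
          constructor
          · intro x hx
            simp only [Finset.mem_filter, Finset.mem_univ, true_and] at hx ⊢
            refine ⟨restrLE_trans h1 hx.1, hx.2.1, fun hxτ => ?_⟩
            exact h3 (restrLE_antisymm (hxτ ▸ hx.1) h1)
          · intro hsub'
            have hmem : ρ ∈ Finset.univ.filter (fun x => RestrLE τ x ∧ RestrLE x σ ∧ x ≠ τ) := by
              simp only [Finset.mem_filter, Finset.mem_univ, true_and]
              exact ⟨h1, h2, h3⟩
            have := hsub' hmem
            simp only [Finset.mem_filter, Finset.mem_univ, true_and] at this
            exact this.2.2 rfl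
        have := Finset.card_lt_card hsub
        omega
      have h0 := hrec τ hτ hts
      have hτA : τ ∈ Finset.univ.filter (fun ρ => RestrLE τ ρ ∧ RestrLE ρ σ) := by
        simp only [Finset.mem_filter, Finset.mem_univ, true_and]
        exact ⟨restrLE_refl τ, hτ⟩
      rw [← Finset.add_sum_erase _ f hτA, ← Finset.add_sum_erase _ g hτA] at h0
      have hsum : ∑ ρ ∈ (Finset.univ.filter (fun ρ => RestrLE τ ρ ∧ RestrLE ρ σ)).erase τ, f ρ
          = ∑ ρ ∈ (Finset.univ.filter (fun ρ => RestrLE τ ρ ∧ RestrLE ρ σ)).erase τ, g ρ := by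
        refine Finset.sum_congr rfl fun ρ hρ => ?_
        rw [Finset.mem_erase, Finset.mem_filter] at hρ
        exact hρeq ρ hρ.2.2.1 hρ.2.2.2 hρ.1
      rw [hsum] at h0
      linarith
  intro τ hτ
  exact key _ τ hτ le_rfl

section main
variable {S T : Finset α} (hd : Disjoint S T) {τ σ : Equiv.Perm α}

include hd

/-- The interval `[τ, σ]` factors as a product of intervals when `σ` splits over `S, T`. -/
lemma interval_prod_sum {M : Type*} [AddCommMonoid M]
    (hσfix : ∀ a ∉ S ∪ T, σ a = a)
    (hcyc : ∀ a b : α, σ.SameCycle a b → (a ∈ S → b ∈ S) ∧ (a ∈ T → b ∈ T))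
    (hτσ : RestrLE τ σ) (F : Equiv.Perm α → Equiv.Perm α → M) :
    ∑ ρ ∈ Finset.univ.filter (fun ρ => RestrLE τ ρ ∧ RestrLE ρ σ),
        F (frPerm ρ S) (frPerm ρ T)
      = ∑ ρ₁ ∈ Finset.univ.filter
            (fun ρ₁ => RestrLE (frPerm τ S) ρ₁ ∧ RestrLE ρ₁ (frPerm σ S)),
          ∑ ρ₂ ∈ Finset.univ.filter
            (fun ρ₂ => RestrLE (frPerm τ T) ρ₂ ∧ RestrLE ρ₂ (frPerm σ T)),
            F ρ₁ ρ₂ := by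
  have hσsplit : splitP S T σ = σ := splitP_eq_self hd hcyc hσfix
  have hτfix : ∀ a ∉ S ∪ T, τ a = a := supp_of_le hτσ hσfix
  have hτcyc : ∀ a b : α, τ.SameCycle a b → (a ∈ S → b ∈ S) ∧ (a ∈ T → b ∈ T) :=
    fun a b h => hcyc a b (hτσ.1 a b h)
  have hτsplit : splitP S T τ = τ := splitP_eq_self hd hτcyc hτfix
  rw [← Finset.sum_product']
  refine Finset.sum_nbij' (fun ρ => (frPerm ρ S, frPerm ρ T)) (fun p => p.1 * p.2)
    ?_ ?_ ?_ ?_ ?_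
  · intro ρ hρ
    simp only [Finset.mem_filter, Finset.mem_univ, true_and, Finset.mem_product] at hρ ⊢
    exact ⟨⟨fr_mono S hρ.1, fr_mono S hρ.2⟩, ⟨fr_mono T hρ.1, fr_mono T hρ.2⟩⟩
  · intro p hp
    simp only [Finset.mem_filter, Finset.mem_univ, true_and, Finset.mem_product] at hp ⊢
    obtain ⟨⟨h1S, h2S⟩, h1T, h2T⟩ := hp
    have hp1 : ∀ a ∉ S, p.1 a = a := supp_of_le h2S (frS_supp σ S)
    have hp2 : ∀ a ∉ T, p.2 a = a := supp_of_le h2T (frS_supp σ T)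
    constructor
    · rw [← hτsplit]
      exact prod_le hd hp1 hp2 (frS_supp τ S) (frS_supp τ T) h1S h1T
    · rw [← hσsplit]
      exact prod_le hd (frS_supp σ S) (frS_supp σ T) hp1 hp2 h2S h2T
  · intro ρ hρ
    simp only [Finset.mem_filter, Finset.mem_univ, true_and] at hρ
    have hρfix : ∀ a ∉ S ∪ T, ρ a = a := supp_of_le hρ.2 hσfix
    have hρcyc : ∀ a b : α, ρ.SameCycle a b → (a ∈ S → b ∈ S) ∧ (a ∈ T → b ∈ T) :=
      fun a b h => hcyc a b (hρ.2.1 a b h)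
    exact splitP_eq_self hd hρcyc hρfix
  · intro p hp
    simp only [Finset.mem_filter, Finset.mem_univ, true_and, Finset.mem_product] at hp
    obtain ⟨⟨h1S, h2S⟩, h1T, h2T⟩ := hp
    have hp1 : ∀ a ∉ S, p.1 a = a := supp_of_le h2S (frS_supp σ S)
    have hp2 : ∀ a ∉ T, p.2 a = a := supp_of_le h2T (frS_supp σ T)
    exact Prod.ext (fr_mul_left hd hp1 hp2) (fr_mul_right hd hp1 hp2)
  · intro ρ _
    rfl

/-- Product formula for the Möbius function in the split case. -/
lemma mu_prod (hσfix : ∀ a ∉ S ∪ T, σ a = a)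
    (hcyc : ∀ a b : α, σ.SameCycle a b → (a ∈ S → b ∈ S) ∧ (a ∈ T → b ∈ T))
    (mu : Equiv.Perm α → Equiv.Perm α → ℚ)
    (hmu_refl : ∀ σ₀ : Equiv.Perm α, mu σ₀ σ₀ = 1)
    (hmu_sum : ∀ τ σ₀ : Equiv.Perm α, RestrLE τ σ₀ → τ ≠ σ₀ →
      ∑ ρ ∈ Finset.univ.filter (fun ρ => RestrLE τ ρ ∧ RestrLE ρ σ₀), mu ρ σ₀ = 0) :
    ∀ τ, RestrLE τ σ →
      mu τ σ = mu (frPerm τ S) (frPerm σ S) * mu (frPerm τ T) (frPerm σ T) := by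
  refine moebius_unique σ (fun τ => mu τ σ)
    (fun τ => mu (frPerm τ S) (frPerm σ S) * mu (frPerm τ T) (frPerm σ T)) ?_ ?_
  · rw [hmu_refl, hmu_refl, hmu_refl, one_mul]
  · intro τ hτ hne
    rw [hmu_sum τ σ hτ hne]
    rw [interval_prod_sum hd hσfix hcyc hτ
      (fun ρ₁ ρ₂ => mu ρ₁ (frPerm σ S) * mu ρ₂ (frPerm σ T)), ← Finset.sum_mul_sum]
    have hτfix : ∀ a ∉ S ∪ T, τ a = a := supp_of_le hτ hσfix
    have hτcyc : ∀ a b : α, τ.SameCycle a b → (a ∈ S → b ∈ S) ∧ (a ∈ T → b ∈ T) :=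
      fun a b h => hcyc a b (hτ.1 a b h)
    by_cases hS : frPerm τ S = frPerm σ S
    · have hT : frPerm τ T ≠ frPerm σ T := by
        intro hT
        refine hne ?_
        rw [← splitP_eq_self hd hτcyc hτfix, ← splitP_eq_self hd hcyc hσfix,
          splitP, splitP, hS, hT]
      rw [hmu_sum (frPerm τ T) (frPerm σ T) (fr_mono T hτ) hT, mul_zero]
    · rw [hmu_sum (frPerm τ S) (frPerm σ S) (fr_mono S hτ) hS, zero_mul]

/-- Weisner-type vanishing: fiber sums of the Möbius function over the splitting map vanish
when `σ` does not split. -/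
lemma weisner (hσfix : ∀ a ∉ S ∪ T, σ a = a)
    (mu : Equiv.Perm α → Equiv.Perm α → ℚ)
    (hmu_sum : ∀ τ σ₀ : Equiv.Perm α, RestrLE τ σ₀ → τ ≠ σ₀ →
      ∑ ρ ∈ Finset.univ.filter (fun ρ => RestrLE τ ρ ∧ RestrLE ρ σ₀), mu ρ σ₀ = 0)
    (hsne : splitP S T σ ≠ σ) :
    ∀ u, RestrLE u (splitP S T σ) →
      ∑ τ ∈ Finset.univ.filter (fun τ => RestrLE τ σ ∧ splitP S T τ = u), mu τ σ = 0 := by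
  set s := splitP S T σ with hsdef
  have hsσ : RestrLE s σ := splitP_le hd
  have hsplit_eq : ∀ τ : Equiv.Perm α, RestrLE τ σ → RestrLE s τ → splitP S T τ = s := by
    intro τ h1 h2
    exact restrLE_antisymm (splitP_mono hd h1)
      (le_splitP hd h1 (restrLE_refl s) h2)
  refine moebius_unique s
    (fun u => ∑ τ ∈ Finset.univ.filter (fun τ => RestrLE τ σ ∧ splitP S T τ = u), mu τ σ)
    (fun _ => 0) ?_ ?_
  · have hfe : Finset.univ.filter (fun τ => RestrLE τ σ ∧ splitP S T τ = s)
        = Finset.univ.filter (fun τ => RestrLE s τ ∧ RestrLE τ σ) := by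
      ext τ
      simp only [Finset.mem_filter, Finset.mem_univ, true_and]
      constructor
      · rintro ⟨h1, h2⟩
        exact ⟨h2 ▸ splitP_le hd, h1⟩
      · rintro ⟨h1, h2⟩
        exact ⟨h2, hsplit_eq τ h2 h1⟩
    rw [hfe, hmu_sum s σ hsσ hsne]
  · intro u hu hune
    rw [Finset.sum_const_zero]
    have huσ : RestrLE u σ := restrLE_trans hu hsσ
    have huneσ : u ≠ σ := by
      intro h
      exact hsne (restrLE_antisymm hsσ (h ▸ hu))
    -- collapse the double sum
    have hinner : ∀ u' ∈ Finset.univ.filter (fun u' => RestrLE u u' ∧ RestrLE u' s),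
        (∑ τ ∈ Finset.univ.filter (fun τ => RestrLE τ σ ∧ splitP S T τ = u'), mu τ σ)
          = ∑ τ ∈ (Finset.univ.filter
              (fun τ => RestrLE τ σ ∧ RestrLE u (splitP S T τ))).filter
              (fun τ => splitP S T τ = u'), mu τ σ := by
      intro u' hu'
      simp only [Finset.mem_filter, Finset.mem_univ, true_and] at hu'
      refine Finset.sum_congr ?_ (fun _ _ => rfl)
      rw [Finset.filter_filter]
      ext τ
      simp only [Finset.mem_filter, Finset.mem_univ, true_and]
      constructor
      · rintro ⟨h1, h2⟩
        exact ⟨⟨h1, h2 ▸ hu'.1⟩, h2⟩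
      · rintro ⟨⟨h1, _⟩, h2⟩
        exact ⟨h1, h2⟩
    rw [Finset.sum_congr rfl hinner]
    rw [Finset.sum_fiberwise_of_maps_to (fun τ hτ => ?_) (fun τ => mu τ σ)]
    swap
    · simp only [Finset.mem_filter, Finset.mem_univ, true_and] at hτ ⊢
      exact ⟨hτ.2, splitP_mono hd hτ.1⟩
    have hCe : Finset.univ.filter (fun τ => RestrLE τ σ ∧ RestrLE u (splitP S T τ))
        = Finset.univ.filter (fun τ => RestrLE u τ ∧ RestrLE τ σ) := by
      ext τ
      simp only [Finset.mem_filter, Finset.mem_univ, true_and]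
      constructor
      · rintro ⟨h1, h2⟩
        exact ⟨restrLE_trans h2 (splitP_le hd), h1⟩
      · rintro ⟨h1, h2⟩
        exact ⟨h2, le_splitP hd h2 hu h1⟩
    rw [hCe, hmu_sum u σ huσ huneσ]

end main


lemma smul_tmul_mul (c d : ℚ) (x y : Equiv.Perm α →₀ ℚ) :
    (c * d) • (x ⊗ₜ[ℚ] y) = (c • x) ⊗ₜ[ℚ] (d • y) := by
  have h1 : (c • x) ⊗ₜ[ℚ] (d • y) = c • (x ⊗ₜ[ℚ] (d • y)) :=
    (TensorProduct.smul_tmul' c x (d • y)).symm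
  rw [h1, TensorProduct.tmul_smul, smul_smul]


theorem DeltaST_powersum (S T : Finset α) (hST : Disjoint S T)
    (σ : Equiv.Perm α) (hσ : ∀ a ∉ S ∪ T, σ a = a)
    (mu : Equiv.Perm α → Equiv.Perm α → ℚ)
    (hmu_refl : ∀ σ₀ : Equiv.Perm α, mu σ₀ σ₀ = 1)
    (hmu_sum : ∀ τ σ₀ : Equiv.Perm α, RestrLE τ σ₀ → τ ≠ σ₀ →
      ∑ ρ ∈ Finset.univ.filter (fun ρ => RestrLE τ ρ ∧ RestrLE ρ σ₀), mu ρ σ₀ = 0) :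
    ((∀ a b : α, σ.SameCycle a b → (a ∈ S → b ∈ S) ∧ (a ∈ T → b ∈ T)) →
        DeltaST S T (powersum mu σ)
          = (powersum mu (frPerm σ S)) ⊗ₜ[ℚ] (powersum mu (frPerm σ T))) ∧
    ((¬ ∀ a b : α, σ.SameCycle a b → (a ∈ S → b ∈ S) ∧ (a ∈ T → b ∈ T)) →
        DeltaST S T (powersum mu σ)
          = (0 : (Equiv.Perm α →₀ ℚ) ⊗[ℚ] (Equiv.Perm α →₀ ℚ))) := by
  have hΔ : DeltaST S T (powersum mu σ)
      = ∑ τ ∈ Finset.univ.filter (fun τ => RestrLE τ σ),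
          mu τ σ • (Finsupp.single (frPerm τ S) (1 : ℚ) ⊗ₜ[ℚ]
            Finsupp.single (frPerm τ T) (1 : ℚ)) := by
    rw [powersum]
    unfold DeltaST
    rw [← Finsupp.sum_finsetSum_index
      (h := fun τ (c : ℚ) => c • (Finsupp.single (frPerm τ S) (1 : ℚ) ⊗ₜ[ℚ]
        Finsupp.single (frPerm τ T) (1 : ℚ)))
      (fun i => zero_smul ℚ _) (fun i b1 b2 => add_smul b1 b2 _)]
    exact Finset.sum_congr rfl fun τ _ => Finsupp.sum_single_index (zero_smul ℚ _)
  have hA : ∀ f : Equiv.Perm α,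
      Finset.univ.filter (fun ρ => RestrLE 1 ρ ∧ RestrLE ρ f)
        = Finset.univ.filter (fun ρ => RestrLE ρ f) := by
    intro f
    ext ρ
    simp only [Finset.mem_filter, Finset.mem_univ, true_and]
    exact ⟨fun h => h.2, fun h => ⟨restrLE_one_le ρ, h⟩⟩
  constructor
  · -- split case
    intro hcyc
    rw [hΔ]
    have hmp := mu_prod hST hσ hcyc mu hmu_refl hmu_sum
    have step1 : ∀ τ ∈ Finset.univ.filter (fun τ => RestrLE τ σ),
        mu τ σ • (Finsupp.single (frPerm τ S) (1 : ℚ) ⊗ₜ[ℚ]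
            Finsupp.single (frPerm τ T) (1 : ℚ))
          = Finsupp.single (frPerm τ S) (mu (frPerm τ S) (frPerm σ S)) ⊗ₜ[ℚ]
            Finsupp.single (frPerm τ T) (mu (frPerm τ T) (frPerm σ T)) := by
      intro τ hτ
      simp only [Finset.mem_filter, Finset.mem_univ, true_and] at hτ
      rw [hmp τ hτ, smul_tmul_mul, Finsupp.smul_single', Finsupp.smul_single',
        mul_one, mul_one]
    rw [Finset.sum_congr rfl step1, ← hA σ,
      interval_prod_sum hST hσ hcyc (restrLE_one_le σ)
        (fun ρ₁ ρ₂ => Finsupp.single ρ₁ (mu ρ₁ (frPerm σ S)) ⊗ₜ[ℚ]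
          Finsupp.single ρ₂ (mu ρ₂ (frPerm σ T)))]
    rw [frPerm_one, frPerm_one, powersum, powersum, TensorProduct.sum_tmul]
    refine Finset.sum_congr (hA _) fun ρ₁ _ => ?_
    rw [TensorProduct.tmul_sum]
    exact Finset.sum_congr (hA _) fun ρ₂ _ => rfl
  · -- non-split case
    intro hcyc
    rw [hΔ]
    have hsne : splitP S T σ ≠ σ := by
      intro h
      exact hcyc (h ▸ splitP_satisfies hST)
    have hmaps : ∀ τ ∈ Finset.univ.filter (fun τ => RestrLE τ σ),
        splitP S T τ ∈ Finset.univ.filter (fun u => RestrLE u (splitP S T σ)) := by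
      intro τ hτ
      simp only [Finset.mem_filter, Finset.mem_univ, true_and] at hτ ⊢
      exact splitP_mono hST hτ
    rw [← Finset.sum_fiberwise_of_maps_to hmaps
      (fun τ => mu τ σ • (Finsupp.single (frPerm τ S) (1 : ℚ) ⊗ₜ[ℚ]
        Finsupp.single (frPerm τ T) (1 : ℚ)))]
    refine Finset.sum_eq_zero fun u hu => ?_
    simp only [Finset.mem_filter, Finset.mem_univ, true_and] at hu
    have hkey : ∀ τ ∈ (Finset.univ.filter (fun τ => RestrLE τ σ)).filter
        (fun τ => splitP S T τ = u),
        mu τ σ • (Finsupp.single (frPerm τ S) (1 : ℚ) ⊗ₜ[ℚ]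
            Finsupp.single (frPerm τ T) (1 : ℚ))
          = mu τ σ • (Finsupp.single (frPerm u S) (1 : ℚ) ⊗ₜ[ℚ]
            Finsupp.single (frPerm u T) (1 : ℚ)) := by
      intro τ hτ
      simp only [Finset.mem_filter, Finset.mem_univ, true_and] at hτ
      have hS' : frPerm τ S = frPerm u S := by
        rw [← hτ.2, splitP, fr_mul_left hST (frS_supp τ S) (frS_supp τ T)]
      have hT' : frPerm τ T = frPerm u T := by
        rw [← hτ.2, splitP, fr_mul_right hST (frS_supp τ S) (frS_supp τ T)]
      rw [hS', hT']
    rw [Finset.sum_congr rfl hkey, ← Finset.sum_smul]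
    have hw := weisner hST hσ mu hmu_sum hsne u hu
    rw [Finset.filter_filter]
    rw [hw, zero_smul]
end
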